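/- For X uniform on (0,1) and a single decision boundary l in (0,1) shared by two users, with the Bayes estimate of the max being l/sqrt(3) when both users are below l: the expected distortion contribution E[(max(X_1,X_2) - z) * 1{both below l}] minimized over z in [0,l] is attained at z = l/sqrt(3) and equals (2(sqrt(3)-1)/(3*sqrt(3))) * l^3. -/
import Mathlib

open MeasureTheory intervalIntegral

/-- Expected distortion contribution `E[d(M,z)·1{both ≤ l}]` for two i.i.d.
Uniform(0,1) sources: the max `M` conditioned on both values `≤ l` has density
`2m/l²` on `[0,l]`, and the distortion of estimate `z` is `M − z` if `z ≤ M`, else `M`;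
scaled by `P(both ≤ l) = l²` this is `∫_0^l (if z ≤ m then m − z else m)·(2m) dm`. -/
noncomputable def Dunif (l z : ℝ) : ℝ :=
  ∫ m in (0 : ℝ)..l, (if z ≤ m then m - z else m) * (2 * m)

lemma Dunif_intble (z : ℝ) (a b : ℝ) :
    IntervalIntegrable (fun m => (if z ≤ m then m - z else m) * (2 * m)) volume a b := by
  have heq : (fun m : ℝ => (if z ≤ m then m - z else m) * (2 * m))
      = fun m => m * (2 * m) - (Set.Ici z).indicator (fun m => z * (2 * m)) m := by
    funext m
    by_cases h : z ≤ m <;> simp [Set.indicator_apply, h] <;> ring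
  rw [heq]
  apply IntervalIntegrable.sub
  · exact (by continuity : Continuous fun m : ℝ => m * (2 * m)).intervalIntegrable a b
  · rw [intervalIntegrable_iff]
    exact ((by continuity : Continuous fun m : ℝ => z * (2 * m)).integrableOn_uIoc).indicator
      measurableSet_Ici

lemma Dunif_eq (l z : ℝ) (hz0 : 0 ≤ z) (hzl : z ≤ l) :
    Dunif l z = z ^ 3 - l ^ 2 * z + 2 * l ^ 3 / 3 := by
  have hsplit : Dunif l z
      = (∫ m in (0:ℝ)..z, (if z ≤ m then m - z else m) * (2 * m))
      + ∫ m in z..l, (if z ≤ m then m - z else m) * (2 * m) := by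
    rw [Dunif, ← intervalIntegral.integral_add_adjacent_intervals (Dunif_intble z 0 z)
      (Dunif_intble z z l)]
  have h1 : (∫ m in (0:ℝ)..z, (if z ≤ m then m - z else m) * (2 * m))
      = ∫ m in (0:ℝ)..z, 2 * m ^ 2 := by
    apply intervalIntegral.integral_congr_ae
    have hz : ∀ᵐ m : ℝ, m ≠ z := by
      refine (MeasureTheory.ae_iff).mpr ?_
      simpa using measure_singleton (μ := (volume : Measure ℝ)) z
    filter_upwards [hz] with m hm hmem
    rw [Set.uIoc_of_le hz0] at hmem
    have : ¬ z ≤ m := by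
      rcases hmem with ⟨_, h2⟩
      exact fun h => hm (le_antisymm h2 h)
    simp [this]; ring
  have h2 : (∫ m in z..l, (if z ≤ m then m - z else m) * (2 * m))
      = ∫ m in z..l, (2 * m ^ 2 - 2 * z * m) := by
    apply intervalIntegral.integral_congr
    intro m hm
    rw [Set.uIcc_of_le hzl] at hm
    simp only [if_pos hm.1]
    ring
  rw [hsplit, h1, h2]
  have e1 : (∫ m in (0:ℝ)..z, 2 * m ^ 2) = 2 * (z ^ 3 / 3) := by
    rw [intervalIntegral.integral_const_mul, integral_pow]; norm_num
  have e2 : (∫ m in z..l, (2 * m ^ 2 - 2 * z * m))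
      = 2 * ((l ^ 3 - z ^ 3) / 3) - 2 * z * ((l ^ 2 - z ^ 2) / 2) := by
    rw [intervalIntegral.integral_sub, intervalIntegral.integral_const_mul,
      intervalIntegral.integral_const_mul, integral_pow, integral_id]
    · norm_num
    · exact ((by continuity : Continuous fun m : ℝ => 2 * m ^ 2).intervalIntegrable z l)
    · exact ((by continuity : Continuous fun m : ℝ => 2 * z * m).intervalIntegrable z l)
  rw [e1, e2]; ring

/-- For Uniform(0,1) sources and a single shared boundary `l ∈ (0,1)`, the expected
distortion contribution when both users are below `l`, minimized over estimates
`z ∈ [0,l]`, is attained at `z = l/√3` and equals `(2(√3−1)/(3√3)) l³`. -/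
theorem uniform_both_below_optimal_estimate (l : ℝ) (hl0 : 0 < l) (hl1 : l < 1) :
    (∀ z ∈ Set.Icc (0 : ℝ) l, Dunif l (l / Real.sqrt 3) ≤ Dunif l z) ∧
    Dunif l (l / Real.sqrt 3)
      = 2 * (Real.sqrt 3 - 1) / (3 * Real.sqrt 3) * l ^ 3 := by
  set s := Real.sqrt 3 with hs
  have hs2 : s ^ 2 = 3 := Real.sq_sqrt (by norm_num)
  have hs1 : 1 ≤ s := by nlinarith [Real.sqrt_nonneg 3]
  have hspos : 0 < s := by linarith
  have hz0 : 0 ≤ l / s := by positivity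
  have hzl : l / s ≤ l := by
    rw [div_le_iff₀ hspos]; nlinarith
  have hstar : Dunif l (l / s) = (l/s) ^ 3 - l ^ 2 * (l/s) + 2 * l ^ 3 / 3 :=
    Dunif_eq l (l/s) hz0 hzl
  constructor
  · intro z hz
    rw [hstar, Dunif_eq l z hz.1 hz.2]
    have hl2 : l ^ 2 = 3 * (l/s) ^ 2 := by
      have : l = (l/s) * s := by field_simp
      calc l ^ 2 = ((l/s) * s) ^ 2 := by rw [← this]
        _ = (l/s) ^ 2 * s ^ 2 := by ring
        _ = 3 * (l/s) ^ 2 := by rw [hs2]; ring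
    have key : z ^ 3 - l ^ 2 * z - ((l/s) ^ 3 - l ^ 2 * (l/s))
        = (z - l/s) ^ 2 * (z + 2 * (l/s)) := by
      rw [hl2]; ring
    have hpos : 0 ≤ (z - l/s) ^ 2 * (z + 2 * (l/s)) :=
      mul_nonneg (sq_nonneg _) (by linarith [hz.1, hz0])
    linarith [key, hpos]
  · rw [hstar]
    have h3 : s ^ 3 = 3 * s := by nlinarith
    rw [div_pow, h3]
    field_simp
    ring
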